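/- Let H = H₀ ⊕ H₁ be an orthogonal decomposition of a complex Hilbert space into closed subspaces and T ∈ L(H) with block components T_ij ∈ L(H_j,H_i). If Re T ≥ d for some d > 0, then Re T₁₁ ≥ d (in particular T₁₁ is boundedly invertible) and Re(T₀₀ − T₀₁T₁₁⁻¹T₁₀) ≥ d. -/

import Mathlib

noncomputable section
open Filter Topology ContinuousLinearMap

namespace Paper

/-- `Re S ≥ c` for a bounded operator on a complex Hilbert space:
`Re⟨Sφ,φ⟩ ≥ c‖φ‖²` for all `φ`. -/
def ReGE {K : Type*} [NormedAddCommGroup K] [InnerProductSpace ℂ K]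
    (S : K →L[ℂ] K) (c : ℝ) : Prop :=
  ∀ φ : K, c * ‖φ‖ ^ 2 ≤ (inner ℂ (S φ) φ : ℂ).re

variable {H : Type*} [NormedAddCommGroup H] [InnerProductSpace ℂ H] [CompleteSpace H]

/-- Block components of `M ∈ L(H)` w.r.t. the orthogonal decomposition `H = H₀ ⊕ H₀ᗮ`:
`M_ij = P_i ∘ M ∘ ι_j`. -/
def blk00 (H₀ : Submodule ℂ H) [CompleteSpace H₀] (M : H →L[ℂ] H) : H₀ →L[ℂ] H₀ :=
  H₀.orthogonalProjection ∘L M ∘L H₀.subtypeL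

def blk01 (H₀ : Submodule ℂ H) [CompleteSpace H₀] (M : H →L[ℂ] H) : H₀ᗮ →L[ℂ] H₀ :=
  H₀.orthogonalProjection ∘L M ∘L H₀ᗮ.subtypeL

def blk10 (H₀ : Submodule ℂ H) [CompleteSpace H₀] (M : H →L[ℂ] H) : H₀ →L[ℂ] H₀ᗮ :=
  H₀ᗮ.orthogonalProjection ∘L M ∘L H₀.subtypeL

def blk11 (H₀ : Submodule ℂ H) [CompleteSpace H₀] (M : H →L[ℂ] H) : H₀ᗮ →L[ℂ] H₀ᗮ :=
  H₀ᗮ.orthogonalProjection ∘L M ∘L H₀ᗮ.subtypeL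

/-- `M₀₀⁻¹` (via `Ring.inverse`, which is the genuine inverse when `M₀₀` is invertible). -/
def schur00 (H₀ : Submodule ℂ H) [CompleteSpace H₀] (M : H →L[ℂ] H) : H₀ →L[ℂ] H₀ :=
  Ring.inverse (blk00 H₀ M)

/-- `M₁₀M₀₀⁻¹`. -/
def schur10 (H₀ : Submodule ℂ H) [CompleteSpace H₀] (M : H →L[ℂ] H) : H₀ →L[ℂ] H₀ᗮ :=
  blk10 H₀ M ∘L schur00 H₀ M

/-- `M₀₀⁻¹M₀₁`. -/
def schur01 (H₀ : Submodule ℂ H) [CompleteSpace H₀] (M : H →L[ℂ] H) : H₀ᗮ →L[ℂ] H₀ :=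
  schur00 H₀ M ∘L blk01 H₀ M

/-- `M₁₁ − M₁₀M₀₀⁻¹M₀₁`. -/
def schur11 (H₀ : Submodule ℂ H) [CompleteSpace H₀] (M : H →L[ℂ] H) : H₀ᗮ →L[ℂ] H₀ᗮ :=
  blk11 H₀ M - blk10 H₀ M ∘L schur00 H₀ M ∘L blk01 H₀ M

/-- `M ∈ ℳ(H₀,H₁)`: both `M₀₀` and `M` are boundedly invertible. -/
def MemM (H₀ : Submodule ℂ H) [CompleteSpace H₀] (M : H →L[ℂ] H) : Prop :=
  IsUnit (blk00 H₀ M) ∧ IsUnit M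

/-- `M ∈ ℳ(α)`. -/
def MemMa (H₀ : Submodule ℂ H) [CompleteSpace H₀] (a00 a01 a10 a11 : ℝ)
    (M : H →L[ℂ] H) : Prop :=
  MemM H₀ M ∧ ReGE (blk00 H₀ M) a00 ∧ ReGE (schur00 H₀ M) (1 / a11) ∧
    ‖schur10 H₀ M‖ ≤ a10 ∧ ‖schur01 H₀ M‖ ≤ a01 ∧
    ReGE (schur11 H₀ M) a00 ∧ ReGE (Ring.inverse (schur11 H₀ M)) (1 / a11)

omit [CompleteSpace H] in
lemma blk11_inner (H₀ : Submodule ℂ H) [CompleteSpace H₀] (T : H →L[ℂ] H) (φ : ↥H₀ᗮ) :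
    (inner ℂ ((blk11 H₀ T φ : H)) ((φ : H)) : ℂ) = inner ℂ (T (φ : H)) (φ : H) := by
  show (inner ℂ ((H₀ᗮ.orthogonalProjection (T (φ : H)) : H)) (φ : H) : ℂ) = _
  rw [← sub_eq_zero, ← inner_sub_left, ← neg_sub, inner_neg_left,
    Submodule.inner_left_of_mem_orthogonal φ.2
      (show T (φ : H) - (H₀ᗮ.orthogonalProjection (T (φ : H)) : H) ∈ H₀ᗮᗮ from
        Submodule.sub_starProjection_mem_orthogonal (K := H₀ᗮ) (T (φ : H))), neg_zero]

/-- An operator with `Re S ≥ d > 0` on a complex Hilbert space is boundedly invertible. -/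
lemma accretive_isUnit {K : Type*} [NormedAddCommGroup K] [InnerProductSpace ℂ K]
    [CompleteSpace K] (S : K →L[ℂ] K) (d : ℝ) (hd : 0 < d) (hS : ReGE S d) :
    IsUnit S := by
  have hlow : ∀ φ : K, d * ‖φ‖ ≤ ‖S φ‖ := by
    intro φ
    rcases eq_or_ne φ 0 with rfl | h
    · simp
    have h1 : d * ‖φ‖ ^ 2 ≤ ‖S φ‖ * ‖φ‖ := by
      refine (hS φ).trans ((Complex.re_le_norm _).trans ?_)
      exact (norm_inner_le_norm (𝕜 := ℂ) (S φ) φ)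
    have hφ : 0 < ‖φ‖ := norm_pos_iff.mpr h
    nlinarith
  have hanti : AntilipschitzWith (⟨d, hd.le⟩ : NNReal)⁻¹ S := by
    refine S.antilipschitz_of_bound fun x => ?_
    have h := hlow x
    have hdx : ‖x‖ ≤ d⁻¹ * ‖S x‖ := by
      rw [inv_mul_eq_div, le_div_iff₀ hd]; nlinarith
    convert hdx using 2
    exact NNReal.coe_inv _
  have hker : LinearMap.ker (S : K →ₗ[ℂ] K) = ⊥ := (LinearMap.ker_eq_bot (f := (S : K →ₗ[ℂ] K))).mpr hanti.injective
  have hclosed : IsClosed (LinearMap.range (S : K →ₗ[ℂ] K) : Set K) := by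
    have := hanti.isClosed_range S.uniformContinuous
    simpa [Set.range, LinearMap.coe_range] using this
  have : CompleteSpace (LinearMap.range (S : K →ₗ[ℂ] K)) := hclosed.completeSpace_coe
  have hbot : (LinearMap.range (S : K →ₗ[ℂ] K))ᗮ = ⊥ := by
    rw [Submodule.eq_bot_iff]
    intro x hx
    have h0 : (inner ℂ (S x) x : ℂ) = 0 :=
      hx (S x) (LinearMap.mem_range_self _ x)
    have := hS x
    rw [h0] at this
    simp only [Complex.zero_re] at this
    have : ‖x‖ ^ 2 ≤ 0 := by nlinarith
    have : ‖x‖ = 0 := by nlinarith [sq_nonneg ‖x‖, norm_nonneg x]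
    exact norm_eq_zero.mp this
  have hrange : LinearMap.range (S : K →ₗ[ℂ] K) = ⊤ := Submodule.orthogonal_eq_bot_iff.mp hbot
  exact ContinuousLinearMap.isUnit_iff_bijective.mpr
    ⟨hanti.injective, LinearMap.range_eq_top.mp hrange⟩

/-- If `Re T ≥ d > 0` then `Re T₁₁ ≥ d` (so `T₁₁` is boundedly
invertible) and `Re (T₀₀ − T₀₁T₁₁⁻¹T₁₀) ≥ d`. -/
theorem statement_18 (H₀ : Submodule ℂ H) [CompleteSpace H₀]
    (T : H →L[ℂ] H) (d : ℝ) (hd : 0 < d) (hT : ReGE T d) :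
    ReGE (blk11 H₀ T) d ∧ IsUnit (blk11 H₀ T) ∧
    ReGE (blk00 H₀ T - blk01 H₀ T ∘L Ring.inverse (blk11 H₀ T) ∘L blk10 H₀ T) d := by
  -- part 1
  have h1 : ReGE (blk11 H₀ T) d := by
    intro φ
    have h := hT (φ : H)
    rw [Submodule.coe_inner, blk11_inner]
    simpa using h
  have h2 : IsUnit (blk11 H₀ T) := accretive_isUnit _ d hd h1
  refine ⟨h1, h2, ?_⟩
  intro φ
  set ψ : ↥H₀ᗮ := Ring.inverse (blk11 H₀ T) (blk10 H₀ T φ) with hψ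
  set x : H := (φ : H) - (ψ : H) with hx
  have hinv : blk11 H₀ T ψ = blk10 H₀ T φ := by
    have := Ring.mul_inverse_cancel _ h2
    calc blk11 H₀ T ψ = ((blk11 H₀ T) * Ring.inverse (blk11 H₀ T)) (blk10 H₀ T φ) := rfl
    _ = blk10 H₀ T φ := by rw [this]; rfl
  -- P₁ (T x) = 0
  have hP1 : H₀ᗮ.orthogonalProjection (T x) = 0 := by
    have : H₀ᗮ.orthogonalProjection (T x) = blk10 H₀ T φ - blk11 H₀ T ψ := by
      simp [hx, map_sub, blk10, blk11]
    rw [this, hinv, sub_self]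
  -- P₀ (T x) = S φ
  have hP0 : H₀.orthogonalProjection (T x) =
      (blk00 H₀ T - blk01 H₀ T ∘L Ring.inverse (blk11 H₀ T) ∘L blk10 H₀ T) φ := by
    simp [hx, map_sub, blk00, blk01, hψ]
  -- inner ℂ (T x) x equals inner ℂ (S φ) φ
  have horth : (inner ℂ (φ : H) (ψ : H) : ℂ) = 0 :=
    Submodule.inner_right_of_mem_orthogonal φ.2 ψ.2
  have hTx : (inner ℂ (T x) x : ℂ) =
      (inner ℂ ((blk00 H₀ T - blk01 H₀ T ∘L Ring.inverse (blk11 H₀ T) ∘L blk10 H₀ T) φ) φ : ℂ) := by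
    have e1 : (inner ℂ (T x) (φ : H) : ℂ) =
        (inner ℂ ((H₀.orthogonalProjection (T x) : H)) (φ : H) : ℂ) := by
      rw [← sub_eq_zero, ← inner_sub_left]
      exact Submodule.inner_left_of_mem_orthogonal φ.2
        (Submodule.sub_starProjection_mem_orthogonal (K := H₀) (T x))
    have e2 : (inner ℂ (T x) (ψ : H) : ℂ) =
        (inner ℂ ((H₀ᗮ.orthogonalProjection (T x) : H)) (ψ : H) : ℂ) := by
      rw [← sub_eq_zero, ← inner_sub_left]
      exact Submodule.inner_left_of_mem_orthogonal ψ.2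
        (Submodule.sub_starProjection_mem_orthogonal (K := H₀ᗮ) (T x))
    rw [hx, inner_sub_right, e1, e2, hP1, hP0, Submodule.coe_inner]
    simp [inner_sub_left]
  -- ‖φ‖ ≤ ‖x‖
  have hnorm : ‖(φ : ↥H₀)‖ ≤ ‖x‖ := by
    have : (H₀.orthogonalProjection) x = φ := by
      simp [hx, map_sub]
    calc ‖(φ : ↥H₀)‖ = ‖(H₀.orthogonalProjection) x‖ := by rw [this]
    _ ≤ ‖(H₀.orthogonalProjection : H →L[ℂ] H₀)‖ * ‖x‖ := le_opNorm _ _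
    _ ≤ 1 * ‖x‖ := by
        exact mul_le_mul_of_nonneg_right (H₀.orthogonalProjection_norm_le) (norm_nonneg _)
    _ = ‖x‖ := one_mul _
  calc d * ‖φ‖ ^ 2 ≤ d * ‖x‖ ^ 2 := by
        have := pow_le_pow_left₀ (norm_nonneg _) hnorm 2
        nlinarith
  _ ≤ (inner ℂ (T x) x : ℂ).re := hT x
  _ = _ := by rw [hTx]

end Paper
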